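/- For 4 × 4 real matrices A, B define P(A, B) := Σ_{τ ∈ S_4} sgn(τ) ( A_{τ(1)τ(2)} B_{τ(3)τ(4)} + A_{τ(3)τ(4)} B_{τ(1)τ(2)} ), where A_{ij} denotes the (i,j) entry. Then for all h_1, h_2 ∈ SO(4) (i.e. h^T h = I and det h = 1) and all skew-symmetric 4 × 4 real matrices X, B_1, B_2: −(1/64π²) [ P( X − h_1^{-1} X h_1 , h_2 B_2 h_2^{-1} ) − P( B_1 , h_2 X h_2^{-1} − X ) ] = (1/64π²) [ −P(X, h_2 B_2 h_2^{-1}) + P(X, h_2^{-1} B_1 h_2) + P(X, h_1 h_2 B_2 h_2^{-1} h_1^{-1}) − P(X, B_1) ]. -/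

import Mathlib

open Matrix Real

/-- The polarized Pfaffian-type form on 4 × 4 matrices:
`P(A, B) = Σ_{τ ∈ S₄} sgn(τ) (A_{τ(1)τ(2)} B_{τ(3)τ(4)} + A_{τ(3)τ(4)} B_{τ(1)τ(2)})`
(indices written 0-based). -/
noncomputable def Pform (A B : Matrix (Fin 4) (Fin 4) ℝ) : ℝ :=
  ∑ τ : Equiv.Perm (Fin 4),
    ((Equiv.Perm.sign τ : ℤ) : ℝ) *
      (A (τ 0) (τ 1) * B (τ 2) (τ 3) + A (τ 2) (τ 3) * B (τ 0) (τ 1))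

/-- The quadratic Pfaffian-type form `Pf2(M) = Σ_τ sgn(τ) M_{τ0 τ1} M_{τ2 τ3}`. -/
noncomputable def Pf2 (M : Matrix (Fin 4) (Fin 4) ℝ) : ℝ :=
  ∑ τ : Equiv.Perm (Fin 4),
    ((Equiv.Perm.sign τ : ℤ) : ℝ) * (M (τ 0) (τ 1) * M (τ 2) (τ 3))

lemma sum_perm_succ {n : ℕ} (f : Equiv.Perm (Fin (n+1)) → ℝ) :
    ∑ τ : Equiv.Perm (Fin (n+1)), f τ
      = ∑ i : Fin (n+1), ∑ σ : Equiv.Perm (Fin n), f (Equiv.Perm.decomposeFin.symm (i, σ)) := by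
  rw [← Equiv.sum_comp (Equiv.Perm.decomposeFin.symm) f, Fintype.sum_prod_type]

lemma det_fin_four' (M : Matrix (Fin 4) (Fin 4) ℝ) :
    M.det =
      M 0 0 * (M 1 1 * (M 2 2 * M 3 3 - M 2 3 * M 3 2) - M 1 2 * (M 2 1 * M 3 3 - M 2 3 * M 3 1)
        + M 1 3 * (M 2 1 * M 3 2 - M 2 2 * M 3 1))
      - M 0 1 * (M 1 0 * (M 2 2 * M 3 3 - M 2 3 * M 3 2) - M 1 2 * (M 2 0 * M 3 3 - M 2 3 * M 3 0)
        + M 1 3 * (M 2 0 * M 3 2 - M 2 2 * M 3 0))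
      + M 0 2 * (M 1 0 * (M 2 1 * M 3 3 - M 2 3 * M 3 1) - M 1 1 * (M 2 0 * M 3 3 - M 2 3 * M 3 0)
        + M 1 3 * (M 2 0 * M 3 1 - M 2 1 * M 3 0))
      - M 0 3 * (M 1 0 * (M 2 1 * M 3 2 - M 2 2 * M 3 1) - M 1 1 * (M 2 0 * M 3 2 - M 2 2 * M 3 0)
        + M 1 2 * (M 2 0 * M 3 1 - M 2 1 * M 3 0)) := by
  rw [Matrix.det_succ_row_zero]
  simp [Fin.sum_univ_succ, Matrix.det_fin_three, Matrix.submatrix_apply, Fin.succAbove,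
    show Fin.succ (2:Fin 3) = (3:Fin 4) from rfl, show Fin.castSucc (2:Fin 3) = (2:Fin 4) from rfl,
    show ((1:Fin 4) < Fin.succ (2:Fin 3)) = True from by decide]
  ring

set_option maxHeartbeats 4000000 in
set_option maxRecDepth 100000 in
lemma pf2_conj_explicit (g : Matrix (Fin 4) (Fin 4) ℝ) (a b c d e f : ℝ) :
    Pf2 (g * !![0,a,b,c;-a,0,d,e;-b,-d,0,f;-c,-e,-f,0] * gᵀ)
      = g.det * Pf2 !![0,a,b,c;-a,0,d,e;-b,-d,0,f;-c,-e,-f,0] := by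
  rw [det_fin_four']
  unfold Pf2
  simp only [sum_perm_succ, Fintype.sum_unique, Fin.sum_univ_succ, Fin.sum_univ_zero,
    Equiv.Perm.decomposeFin.symm_sign,
    Equiv.Perm.decomposeFin_symm_apply_zero, Equiv.Perm.decomposeFin_symm_apply_one,
    show (2:Fin 4) = (1:Fin 3).succ from rfl, show (3:Fin 4) = (2:Fin 3).succ from rfl,
    show (1:Fin 3) = (0:Fin 2).succ from rfl, show (2:Fin 3) = (1:Fin 2).succ from rfl,
    show (1:Fin 2) = (0:Fin 1).succ from rfl,
    Equiv.Perm.decomposeFin_symm_apply_succ]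
  norm_num [Equiv.swap_apply_def, Fin.ext_iff, Matrix.mul_apply, Fin.sum_univ_succ]
  simp only [show Fin.succ (2:Fin 3) = (3:Fin 4) from rfl, Matrix.cons_val_two, Matrix.cons_val_one,
    Matrix.cons_val_zero, Matrix.vecHead, Matrix.vecTail, Function.comp_apply, Fin.succ_zero_eq_one,
    Fin.succ_one_eq_two]
  ring

/-- A skew matrix equals the explicit skew literal built from its upper entries. -/
lemma skew_eq_explicit (M : Matrix (Fin 4) (Fin 4) ℝ) (hM : Mᵀ = -M) :
    M = !![0, M 0 1, M 0 2, M 0 3; -(M 0 1), 0, M 1 2, M 1 3;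
           -(M 0 2), -(M 1 2), 0, M 2 3; -(M 0 3), -(M 1 3), -(M 2 3), 0] := by
  have h : ∀ i j, M j i = -M i j := fun i j => by
    have := congrFun (congrFun hM i) j
    simpa [Matrix.transpose_apply] using this
  have hd : ∀ i, M i i = 0 := fun i => by have := h i i; linarith
  ext i j
  fin_cases i <;> fin_cases j <;>
    simp [hd, h 0 1, h 0 2, h 0 3, h 1 2, h 1 3, h 2 3]

lemma pf2_conj (g M : Matrix (Fin 4) (Fin 4) ℝ) (hg : gᵀ * g = 1) (hdet : g.det = 1)
    (hM : Mᵀ = -M) : Pf2 (g * M * g⁻¹) = Pf2 M := by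
  have hginv : g⁻¹ = gᵀ := Matrix.inv_eq_left_inv hg
  rw [hginv, skew_eq_explicit M hM, pf2_conj_explicit, hdet, one_mul]

lemma Pform_polar (A B : Matrix (Fin 4) (Fin 4) ℝ) :
    Pform A B = Pf2 (A + B) - Pf2 A - Pf2 B := by
  unfold Pform Pf2
  rw [← Finset.sum_sub_distrib, ← Finset.sum_sub_distrib]
  refine Finset.sum_congr rfl fun τ _ => ?_
  simp [Matrix.add_apply]
  ring

lemma Pform_comm (A B : Matrix (Fin 4) (Fin 4) ℝ) : Pform A B = Pform B A := by
  unfold Pform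
  refine Finset.sum_congr rfl fun τ _ => ?_
  ring

lemma Pform_sub_left (A B C : Matrix (Fin 4) (Fin 4) ℝ) :
    Pform (A - B) C = Pform A C - Pform B C := by
  unfold Pform
  rw [← Finset.sum_sub_distrib]
  refine Finset.sum_congr rfl fun τ _ => ?_
  simp [Matrix.sub_apply]
  ring

lemma Pform_sub_right (A B C : Matrix (Fin 4) (Fin 4) ℝ) :
    Pform A (B - C) = Pform A B - Pform A C := by
  rw [Pform_comm, Pform_sub_left, Pform_comm B A, Pform_comm C A]

/-- Invariance of `Pform` under simultaneous conjugation by `SO(4)` elements,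
for skew-symmetric arguments. -/
lemma Pform_conj (g A B : Matrix (Fin 4) (Fin 4) ℝ) (hg : gᵀ * g = 1) (hdet : g.det = 1)
    (hA : Aᵀ = -A) (hB : Bᵀ = -B) :
    Pform (g * A * g⁻¹) (g * B * g⁻¹) = Pform A B := by
  have hsum : g * (A + B) * g⁻¹ = g * A * g⁻¹ + g * B * g⁻¹ := by
    rw [Matrix.mul_add, Matrix.add_mul]
  have hAB : (A + B)ᵀ = -(A + B) := by rw [Matrix.transpose_add, hA, hB]; abel
  rw [Pform_polar, Pform_polar, ← hsum, pf2_conj g (A+B) hg hdet hAB,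
    pf2_conj g A hg hdet hA, pf2_conj g B hg hdet hB]

/-- Lemma 4.7 (pointwise form): `i_{X_{G×G}} E_{2,2} = (ε₀* − ε₁* + ε₂*) μ(X)` on
`SO(4)`, evaluated at `(h₁, h₂)` on the tangent vector `(h₁ B₁, h₂ B₂)`. -/
theorem contraction_E22_eq_pullback_mu (h₁ h₂ X B₁ B₂ : Matrix (Fin 4) (Fin 4) ℝ)
    (hh₁ : h₁ᵀ * h₁ = 1) (hdet₁ : h₁.det = 1)
    (hh₂ : h₂ᵀ * h₂ = 1) (hdet₂ : h₂.det = 1)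
    (hX : Xᵀ = -X) (hB₁ : B₁ᵀ = -B₁) (hB₂ : B₂ᵀ = -B₂) :
    -(1 / (64 * π ^ 2)) *
        (Pform (X - h₁⁻¹ * X * h₁) (h₂ * B₂ * h₂⁻¹) - Pform B₁ (h₂ * X * h₂⁻¹ - X))
      = (1 / (64 * π ^ 2)) *
          (-Pform X (h₂ * B₂ * h₂⁻¹) + Pform X (h₂⁻¹ * B₁ * h₂)
            + Pform X (h₁ * h₂ * B₂ * h₂⁻¹ * h₁⁻¹) - Pform X B₁) := by
  have hi₁ : h₁⁻¹ = h₁ᵀ := Matrix.inv_eq_left_inv hh₁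
  have hi₂ : h₂⁻¹ = h₂ᵀ := Matrix.inv_eq_left_inv hh₂
  have hh₁' : h₁ * h₁ᵀ = 1 := mul_eq_one_comm.mp hh₁
  have hh₂' : h₂ * h₂ᵀ = 1 := mul_eq_one_comm.mp hh₂
  -- skewness of conjugates
  have skew_conj : ∀ (g B : Matrix (Fin 4) (Fin 4) ℝ), Bᵀ = -B → (g * B * gᵀ)ᵀ = -(g * B * gᵀ) := by
    intro g B hB
    rw [Matrix.transpose_mul, Matrix.transpose_mul, Matrix.transpose_transpose, hB]
    simp [Matrix.mul_assoc]
  have hC : (h₂ * B₂ * h₂⁻¹)ᵀ = -(h₂ * B₂ * h₂⁻¹) := by rw [hi₂]; exact skew_conj _ _ hB₂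
  have hD : (h₂⁻¹ * B₁ * h₂)ᵀ = -(h₂⁻¹ * B₁ * h₂) := by
    rw [hi₂, show h₂ = h₂ᵀᵀ from (Matrix.transpose_transpose h₂).symm]
    exact skew_conj h₂ᵀ _ hB₁
  have hXc : (h₁⁻¹ * X * h₁)ᵀ = -(h₁⁻¹ * X * h₁) := by
    rw [hi₁, show h₁ = h₁ᵀᵀ from (Matrix.transpose_transpose h₁).symm]
    exact skew_conj h₁ᵀ _ hX
  -- key conjugation identities
  have key₁ : Pform (h₁⁻¹ * X * h₁) (h₂ * B₂ * h₂⁻¹) = Pform X (h₁ * h₂ * B₂ * h₂⁻¹ * h₁⁻¹) := by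
    have := Pform_conj h₁ (h₁⁻¹ * X * h₁) (h₂ * B₂ * h₂⁻¹) hh₁ hdet₁ hXc hC
    have hXr : h₁ * (h₁⁻¹ * X * h₁) * h₁⁻¹ = X := by
      rw [hi₁, show h₁ * (h₁ᵀ * X * h₁) * h₁ᵀ = (h₁ * h₁ᵀ) * X * (h₁ * h₁ᵀ) from by
        simp only [Matrix.mul_assoc], hh₁', Matrix.one_mul, Matrix.mul_one]
    rw [hXr] at this
    rw [← this]
    congr 1
    simp only [Matrix.mul_assoc]
  have key₂ : Pform B₁ (h₂ * X * h₂⁻¹) = Pform X (h₂⁻¹ * B₁ * h₂) := by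
    have := Pform_conj h₂ (h₂⁻¹ * B₁ * h₂) X hh₂ hdet₂ hD hX
    have hBr : h₂ * (h₂⁻¹ * B₁ * h₂) * h₂⁻¹ = B₁ := by
      rw [hi₂, show h₂ * (h₂ᵀ * B₁ * h₂) * h₂ᵀ = (h₂ * h₂ᵀ) * B₁ * (h₂ * h₂ᵀ) from by
        simp only [Matrix.mul_assoc], hh₂', Matrix.one_mul, Matrix.mul_one]
    rw [hBr] at this
    rw [this, Pform_comm]
  have expand₁ : Pform (X - h₁⁻¹ * X * h₁) (h₂ * B₂ * h₂⁻¹)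
      = Pform X (h₂ * B₂ * h₂⁻¹) - Pform X (h₁ * h₂ * B₂ * h₂⁻¹ * h₁⁻¹) := by
    rw [Pform_sub_left, key₁]
  have expand₂ : Pform B₁ (h₂ * X * h₂⁻¹ - X)
      = Pform X (h₂⁻¹ * B₁ * h₂) - Pform X B₁ := by
    rw [Pform_sub_right, key₂, Pform_comm B₁ X]
  rw [expand₁, expand₂]
  ring
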